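/- For any real a > −1, the operator Φ_a p := (x²−1)·p' + 2(1+a)·x·p is a complex zero decreasing operator: for every real polynomial p, Z_C((x²−1)p'(x) + 2(1+a)x·p(x)) ≤ Z_C(p). -/

import Mathlib

open Polynomial Finset

open scoped Classical in
/-- Number of non-real complex zeros of a real polynomial, counted with multiplicity. -/
noncomputable def ZC (p : Polynomial ℝ) : ℕ :=
  (((p.map (algebraMap ℝ ℂ)).roots).filter (fun z => z.im ≠ 0)).card

/-- Number of real zeros of a real polynomial, counted with multiplicity. -/
noncomputable def ZR (p : Polynomial ℝ) : ℕ := p.roots.card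

/-- The differential operator Φₐ = (x²-1)D + 2(1+a)x·I on ℝ[x]. -/
noncomputable def Phi (a : ℝ) (p : Polynomial ℝ) : Polynomial ℝ :=
  (X ^ 2 - 1) * derivative p + C (2 * (1 + a)) * X * p

namespace Stmt11Aux

open Polynomial

lemma hasDerivAt_abs_rpow {c t : ℝ} (ht : t ≠ 0) :
    HasDerivAt (fun x : ℝ => |x| ^ c) (c * |t| ^ c / t) t := by
  rcases ht.lt_or_gt with h | h
  · have h1 : HasDerivAt (fun x : ℝ => (-x) ^ c) (c * (-t) ^ (c - 1) * (-1)) t :=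
      (Real.hasDerivAt_rpow_const (p := c) (Or.inl (neg_ne_zero.mpr ht))).comp t (hasDerivAt_neg t)
    have h2 : (fun x : ℝ => (-x) ^ c) =ᶠ[nhds t] fun x : ℝ => |x| ^ c := by
      filter_upwards [Iio_mem_nhds h] with x hx
      rw [abs_of_neg hx]
    have h3 := h1.congr_of_eventuallyEq h2.symm
    refine h3.congr_deriv (Eq.symm ?_)
    rw [abs_of_neg h, Real.rpow_sub (by linarith) c 1, Real.rpow_one]
    field_simp
  · have h1 : HasDerivAt (fun x : ℝ => x ^ c) (c * t ^ (c - 1)) t :=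
      Real.hasDerivAt_rpow_const (p := c) (Or.inl ht)
    have h2 : (fun x : ℝ => x ^ c) =ᶠ[nhds t] fun x : ℝ => |x| ^ c := by
      filter_upwards [Ioi_mem_nhds h] with x hx
      rw [abs_of_pos hx]
    have h3 := h1.congr_of_eventuallyEq h2.symm
    refine h3.congr_deriv (Eq.symm ?_)
    rw [abs_of_pos h, Real.rpow_sub h c 1, Real.rpow_one]
    field_simp

lemma eval_Phi (a : ℝ) (p : Polynomial ℝ) (z : ℝ) :
    (Phi a p).eval z = (z ^ 2 - 1) * (derivative p).eval z + 2 * (1 + a) * z * p.eval z := by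
  simp [Phi]

lemma key_deriv (a : ℝ) (p : Polynomial ℝ) {z : ℝ} (hz : z ^ 2 - 1 ≠ 0) :
    HasDerivAt (fun x : ℝ => |x ^ 2 - 1| ^ (1 + a) * p.eval x)
      (|z ^ 2 - 1| ^ (1 + a) / (z ^ 2 - 1) * (Phi a p).eval z) z := by
  have hu : HasDerivAt (fun x : ℝ => x ^ 2 - 1) (2 * z) z := by
    simpa using ((hasDerivAt_pow 2 z).sub_const 1)
  have h1 : HasDerivAt (fun x : ℝ => |x ^ 2 - 1| ^ (1 + a))
      ((1 + a) * |z ^ 2 - 1| ^ (1 + a) / (z ^ 2 - 1) * (2 * z)) z :=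
    (hasDerivAt_abs_rpow (c := 1 + a) hz).comp (h := fun x : ℝ => x ^ 2 - 1) z hu
  have h2 := p.hasDerivAt z
  have h3 : HasDerivAt (fun x : ℝ => |x ^ 2 - 1| ^ (1 + a) * p.eval x) _ z := h1.mul h2
  convert h3 using 1
  rw [eval_Phi]
  field_simp
  ring


open Polynomial

lemma dvd_deriv (p : Polynomial ℝ) (x : ℝ) :
    (X - C x) ^ (p.rootMultiplicity x - 1) ∣ derivative p :=
  (pow_dvd_pow _ (p.rootMultiplicity_sub_one_le_derivative_rootMultiplicity x)).trans
    ((derivative p).pow_rootMultiplicity_dvd x)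

lemma dvd_phi (a : ℝ) (p : Polynomial ℝ) (x : ℝ) :
    (X - C x) ^ (p.rootMultiplicity x - 1) ∣ Phi a p := by
  have h1 : (X - C x) ^ (p.rootMultiplicity x - 1) ∣ p :=
    (pow_dvd_pow _ (Nat.sub_le _ _)).trans (p.pow_rootMultiplicity_dvd x)
  exact dvd_add ((dvd_deriv p x).mul_left _) (h1.mul_left _)

lemma dvd_phi_pm (a : ℝ) (p : Polynomial ℝ) {x : ℝ} (hx : x * x = 1) :
    (X - C x) ^ p.rootMultiplicity x ∣ Phi a p := by
  rcases Nat.eq_zero_or_eq_succ_pred (p.rootMultiplicity x) with h | h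
  · rw [h]; exact one_dvd _
  · refine dvd_add ?_ ((p.pow_rootMultiplicity_dvd x).mul_left _)
    rw [h, pow_succ']
    refine mul_dvd_mul ⟨X + C x, ?_⟩ ?_
    · have : (C x : Polynomial ℝ) * C x = 1 := by
        rw [← C_mul, hx, map_one]
      linear_combination this
    · exact dvd_deriv p x
  
lemma mult_le (a : ℝ) {p : Polynomial ℝ} (hphi : Phi a p ≠ 0) (x : ℝ) :
    p.rootMultiplicity x ≤ (Phi a p).rootMultiplicity x + 1 := by
  have := (Polynomial.le_rootMultiplicity_iff hphi).2 (dvd_phi a p x)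
  omega

lemma mult_le_pm (a : ℝ) {p : Polynomial ℝ} (hphi : Phi a p ≠ 0) {x : ℝ} (hx : x * x = 1) :
    p.rootMultiplicity x ≤ (Phi a p).rootMultiplicity x :=
  (Polynomial.le_rootMultiplicity_iff hphi).2 (dvd_phi_pm a p hx)

lemma coeff_top (a : ℝ) (p : Polynomial ℝ) :
    (Phi a p).coeff (p.natDegree + 1) =
      ((p.natDegree : ℝ) + 2 * (1 + a)) * p.leadingCoeff := by
  set n := p.natDegree with hn
  have hq : (derivative p).coeff (n + 1) = 0 := by
    apply coeff_eq_zero_of_natDegree_lt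
    have := p.natDegree_derivative_le
    omega
  have h2 : (C (2 * (1 + a)) * X * p).coeff (n + 1) = 2 * (1 + a) * p.coeff n := by
    rw [mul_assoc, coeff_C_mul, coeff_X_mul]
  have h1 : ((X ^ 2 - 1) * derivative p).coeff (n + 1) = (n : ℝ) * p.coeff n := by
    rw [sub_mul, one_mul, coeff_sub, hq, sub_zero]
    rcases Nat.eq_zero_or_pos n with h0 | h0
    · have hp : p = C (p.coeff 0) := p.eq_C_of_natDegree_eq_zero h0
      rw [h0]
      rw [hp]
      simp
    · have : n + 1 = (n - 1) + 2 := by omega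
      rw [this, coeff_X_pow_mul, coeff_derivative]
      have : n - 1 + 1 = n := by omega
      rw [this, Nat.cast_sub (by omega : 1 ≤ n)]
      push_cast
      ring
  simp only [Phi, coeff_add, h1, h2, Polynomial.leadingCoeff, ← hn]
  ring

lemma phi_ne_zero (a : ℝ) (ha : -1 < a) {p : Polynomial ℝ} (hp : p ≠ 0) : Phi a p ≠ 0 := by
  intro h
  have h1 := coeff_top a p
  rw [h, coeff_zero] at h1
  have h2 : ((p.natDegree : ℝ) + 2 * (1 + a)) ≠ 0 := by
    have : (0:ℝ) ≤ (p.natDegree : ℝ) := Nat.cast_nonneg _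
    nlinarith
  exact (Polynomial.leadingCoeff_ne_zero.2 hp) (by
    rcases mul_eq_zero.1 h1.symm with h' | h'
    · exact absurd h' h2
    · exact h')

lemma natDegree_phi (a : ℝ) (ha : -1 < a) {p : Polynomial ℝ} (hp : p ≠ 0) :
    (Phi a p).natDegree = p.natDegree + 1 := by
  set n := p.natDegree with hn
  have hge : n + 1 ≤ (Phi a p).natDegree := by
    apply Polynomial.le_natDegree_of_ne_zero
    rw [coeff_top]
    have h2 : ((n : ℝ) + 2 * (1 + a)) ≠ 0 := by
      have : (0:ℝ) ≤ (n : ℝ) := Nat.cast_nonneg _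
      nlinarith
    exact mul_ne_zero h2 (Polynomial.leadingCoeff_ne_zero.2 hp)
  have hle : (Phi a p).natDegree ≤ n + 1 := by
    apply Polynomial.natDegree_add_le_of_degree_le
    · rcases eq_or_ne (derivative p) 0 with h | h
      · simp [h]
      · have h3 : 1 ≤ n := by
          by_contra h4
          have h5 : n = 0 := by omega
          exact h (by rw [p.eq_C_of_natDegree_eq_zero h5]; simp)
        refine (Polynomial.natDegree_mul_le).trans ?_
        have hd1 : ((X:Polynomial ℝ) ^ 2 - 1).natDegree ≤ 2 := by
          refine (Polynomial.natDegree_sub_le _ _).trans ?_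
          simp
        have hd2 := p.natDegree_derivative_le
        omega
    · refine (Polynomial.natDegree_mul_le).trans ?_
      have hd1 : ((C (2 * (1 + a)) : Polynomial ℝ) * X).natDegree ≤ 1 := by
        refine (Polynomial.natDegree_mul_le).trans ?_
        rw [Polynomial.natDegree_C]
        simp [Polynomial.natDegree_X_le]
      omega
  omega


open Polynomial

lemma contF (a : ℝ) (ha : -1 < a) (p : Polynomial ℝ) :
    Continuous (fun x : ℝ => |x ^ 2 - 1| ^ (1 + a) * p.eval x) := by
  have h1 : Continuous fun x : ℝ => |x ^ 2 - 1| :=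
    (continuous_pow 2).sub continuous_const |>.abs
  exact (h1.rpow_const fun x => Or.inr (by linarith)).mul p.continuous_aeval

lemma sq_ne_one {z : ℝ} (h1 : z ≠ 1) (h2 : z ≠ -1) : z ^ 2 - 1 ≠ 0 := by
  intro h
  have : (z - 1) * (z + 1) = 0 := by nlinarith
  rcases mul_eq_zero.1 this with h' | h'
  · exact h1 (by linarith)
  · exact h2 (by linarith)

lemma interleave (a : ℝ) (ha : -1 < a) {p : Polynomial ℝ} (hp : p ≠ 0) (hphi : Phi a p ≠ 0) :
    (insert (-1 : ℝ) (insert 1 p.roots.toFinset)).card ≤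
      ((Phi a p).roots.toFinset \ insert (-1 : ℝ) (insert 1 p.roots.toFinset)).card + 1 := by
  classical
  set s : Finset ℝ := insert (-1 : ℝ) (insert 1 p.roots.toFinset) with hs
  refine Finset.card_le_diff_of_interleaved fun x hx y hy hxy hxy' => ?_
  set F : ℝ → ℝ := fun x => |x ^ 2 - 1| ^ (1 + a) * p.eval x with hF
  have hF0 : ∀ u ∈ s, F u = 0 := by
    intro u hu
    rcases Finset.mem_insert.1 hu with h | h
    · subst h; simp [hF, Real.zero_rpow (by linarith : (1:ℝ) + a ≠ 0)]
    rcases Finset.mem_insert.1 h with h | h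
    · subst h; simp [hF, Real.zero_rpow (by linarith : (1:ℝ) + a ≠ 0)]
    · have hr := (Polynomial.mem_roots hp).1 (Multiset.mem_toFinset.1 h)
      simp [hF, Polynomial.IsRoot.eq_zero hr]
  have hmem : ∀ z ∈ Set.Ioo x y, z ^ 2 - 1 ≠ 0 := by
    intro z hz
    refine sq_ne_one (fun h => ?_) (fun h => ?_)
    · exact hxy' 1 (by simp [hs]) (h ▸ hz)
    · exact hxy' (-1) (by simp [hs]) (h ▸ hz)
  obtain ⟨c, hc, hc0⟩ := exists_hasDerivAt_eq_zero hxy ((contF a ha p).continuousOn)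
    ((hF0 x hx).trans (hF0 y hy).symm)
    (fun z hz => key_deriv a p (hmem z hz))
  have hcsq := hmem c hc
  have habs : |c ^ 2 - 1| ^ (1 + a) / (c ^ 2 - 1) ≠ 0 := by
    apply div_ne_zero _ hcsq
    exact ne_of_gt (Real.rpow_pos_of_pos (abs_pos.2 hcsq) _)
  have heval : (Phi a p).eval c = 0 := by
    rcases mul_eq_zero.1 hc0 with h | h
    · exact absurd h habs
    · exact h
  have hcT : c ∈ (Phi a p).roots.toFinset := by
    rw [Multiset.mem_toFinset, Polynomial.mem_roots hphi]
    exact heval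
  exact ⟨c, hcT, hc.1, hc.2⟩


open Polynomial

lemma sum_count_le (M : Multiset ℝ) (A : Finset ℝ) : ∑ x ∈ A, M.count x ≤ Multiset.card M := by
  classical
  calc ∑ x ∈ A, M.count x ≤ ∑ x ∈ A ∪ M.toFinset, M.count x :=
        Finset.sum_le_sum_of_subset Finset.subset_union_left
    _ = ∑ x ∈ M.toFinset, M.count x := by
        refine (Finset.sum_subset Finset.subset_union_right fun x _ hx => ?_).symm
        exact Multiset.count_eq_zero.2 (fun h => hx (Multiset.mem_toFinset.2 h))
    _ = Multiset.card M := M.toFinset_sum_count_eq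

lemma main_count (a : ℝ) (ha : -1 < a) {p : Polynomial ℝ} (hp : p ≠ 0) :
    Multiset.card p.roots + 1 ≤ Multiset.card (Phi a p).roots := by
  classical
  have hphi := phi_ne_zero a ha hp
  set s : Finset ℝ := insert (-1 : ℝ) (insert 1 p.roots.toFinset) with hs
  set T : Finset ℝ := (Phi a p).roots.toFinset \ s with hT
  set k : ℕ := (s \ {(-1 : ℝ), 1}).card with hk
  have hsub : ({(-1 : ℝ), 1} : Finset ℝ) ⊆ s := by
    intro z hz
    rcases Finset.mem_insert.1 hz with h | h
    · exact h ▸ Finset.mem_insert_self _ _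
    · simp only [Finset.mem_singleton] at h
      exact h ▸ Finset.mem_insert_of_mem (Finset.mem_insert_self _ _)
  have hscard : s.card = k + 2 := by
    rw [hk, Finset.card_sdiff_of_subset hsub]
    have h2 : ({(-1 : ℝ), 1} : Finset ℝ).card = 2 := by
      rw [Finset.card_insert_of_notMem (by norm_num), Finset.card_singleton]
    have := Finset.card_le_card hsub
    omega
  -- (2) per-element bounds on s
  have hcount : ∀ x ∈ s, p.roots.count x ≤ (Phi a p).roots.count x
      + (if x = -1 ∨ x = 1 then 0 else 1) := by
    intro x hxs
    rw [Polynomial.count_roots, Polynomial.count_roots]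
    by_cases hx : x = -1 ∨ x = 1
    · rw [if_pos hx]
      have hxx : x * x = 1 := by rcases hx with h | h <;> rw [h] <;> norm_num
      simpa using mult_le_pm a hphi hxx
    · rw [if_neg hx]
      exact mult_le a hphi x
  have hsum2 : ∑ x ∈ s, p.roots.count x ≤ (∑ x ∈ s, (Phi a p).roots.count x) + k := by
    calc ∑ x ∈ s, p.roots.count x
        ≤ ∑ x ∈ s, ((Phi a p).roots.count x + if x = -1 ∨ x = 1 then 0 else 1) :=
          Finset.sum_le_sum hcount
      _ = (∑ x ∈ s, (Phi a p).roots.count x) + ∑ x ∈ s, (if x = -1 ∨ x = 1 then 0 else 1) := by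
          rw [Finset.sum_add_distrib]
      _ ≤ (∑ x ∈ s, (Phi a p).roots.count x) + k := by
          gcongr
          have heq : (∑ x ∈ s, if x = -1 ∨ x = 1 then 0 else 1)
              = (s.filter (fun x => ¬(x = -1 ∨ x = 1))).card := by
            rw [Finset.card_filter]
            refine Finset.sum_congr rfl fun x _ => ?_
            by_cases h : x = -1 ∨ x = 1 <;> simp [h]
          rw [heq, hk]
          apply Finset.card_le_card
          intro z hz
          simp only [Finset.mem_filter] at hz
          rw [Finset.mem_sdiff]
          refine ⟨hz.1, fun hmem => hz.2 ?_⟩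
          rcases Finset.mem_insert.1 hmem with h | h
          · exact Or.inl h
          · simp only [Finset.mem_singleton] at h
            exact Or.inr h
  -- (3) sum over s of p-counts is everything
  have hsum3 : ∑ x ∈ s, p.roots.count x = Multiset.card p.roots := by
    rw [← p.roots.toFinset_sum_count_eq]
    refine (Finset.sum_subset ?_ fun x _ hx => ?_).symm
    · intro z hz
      exact Finset.mem_insert_of_mem (Finset.mem_insert_of_mem hz)
    · exact Multiset.count_eq_zero.2 (fun h => hx (Multiset.mem_toFinset.2 h))
  -- (1) total count of Phi roots
  have hdisj : Disjoint s T := Finset.disjoint_sdiff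
  have hA : (∑ x ∈ s, (Phi a p).roots.count x) + ∑ x ∈ T, (Phi a p).roots.count x
      ≤ Multiset.card (Phi a p).roots := by
    rw [← Finset.sum_union hdisj]
    exact sum_count_le _ _
  have hB : s.card ≤ T.card + 1 := interleave a ha hp hphi
  have hC : T.card ≤ ∑ x ∈ T, (Phi a p).roots.count x := by
    rw [Finset.card_eq_sum_ones]
    refine Finset.sum_le_sum fun x hx => ?_
    rw [Nat.succ_le_iff, Multiset.count_pos]
    exact Multiset.mem_toFinset.1 (Finset.mem_sdiff.1 hx).1
  omega

open Complex in
lemma zc_add {q : Polynomial ℝ} (hq : q ≠ 0) : ZC q + Multiset.card q.roots = q.natDegree := by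
  classical
  have hmap : q.map (algebraMap ℝ ℂ) ≠ 0 :=
    (Polynomial.map_ne_zero_iff (algebraMap ℝ ℂ).injective).2 hq
  have hcard : Multiset.card ((q.map (algebraMap ℝ ℂ)).roots) = q.natDegree :=
    by rw [← (IsAlgClosed.splits (q.map (algebraMap ℝ ℂ))).natDegree_eq_card_roots, natDegree_map]
  have hreal : ((q.map (algebraMap ℝ ℂ)).roots).filter (fun z => ¬ z.im ≠ 0)
      = q.roots.map (algebraMap ℝ ℂ) := by
    ext z
    by_cases hz : z.im = 0
    · have hzr : z = ((z.re : ℝ) : ℂ) := by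
        apply Complex.ext <;> simp [hz]
      rw [Multiset.count_filter_of_pos (by simpa using hz)]
      rw [hzr, Polynomial.count_roots]
      rw [show ((z.re : ℝ) : ℂ) = algebraMap ℝ ℂ z.re from rfl]
      rw [← Polynomial.eq_rootMultiplicity_map (algebraMap ℝ ℂ).injective]
      rw [Multiset.count_map_eq_count' _ _ (algebraMap ℝ ℂ).injective]
      rw [Polynomial.count_roots]
    · rw [Multiset.count_filter_of_neg (by simpa using hz)]
      refine (Multiset.count_eq_zero.2 fun hmem => ?_).symm
      obtain ⟨r, _, hr⟩ := Multiset.mem_map.1 hmem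
      apply hz
      rw [← hr]
      simp
  have hfilt := Multiset.filter_add_not (fun z => z.im ≠ 0) ((q.map (algebraMap ℝ ℂ)).roots)
  have := congrArg Multiset.card hfilt
  rw [Multiset.card_add, hreal, Multiset.card_map] at this
  rw [ZC] at *
  omega


end Stmt11Aux

theorem stmt11 (a : ℝ) (ha : -1 < a) (p : Polynomial ℝ) :
    ZC (Phi a p) ≤ ZC p := by
  by_cases hp : p = 0
  · subst hp
    have h0 : Phi a 0 = 0 := by simp [Phi]
    rw [h0]
  · have h1 := Stmt11Aux.zc_add (Stmt11Aux.phi_ne_zero a ha hp)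
    have h2 := Stmt11Aux.zc_add hp
    have h3 := Stmt11Aux.main_count a ha hp
    have h4 := Stmt11Aux.natDegree_phi a ha hp
    omega
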